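/- A minimal distal ℤ^d-system (X,T₁,…,T_d) has the unique closing parallelepiped property if and only if R_{T₁,…,T_d}(X) = Δ_X. -/

import Mathlib

open Function Set

/-- The group of self-homeomorphisms of a topological space, under composition. -/
instance homeomorphGroup {X : Type*} [TopologicalSpace X] : Group (X ≃ₜ X) where
  mul f g := g.trans f
  one := Homeomorph.refl X
  inv := Homeomorph.symm
  mul_assoc _ _ _ := rfl
  one_mul _ := Homeomorph.ext fun _ => rfl
  mul_one _ := Homeomorph.ext fun _ => rfl
  inv_mul_cancel f := Homeomorph.self_trans_symm f

variable {d : ℕ}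

/-- The homeomorphism `T₁^{n₁ε₁} ⋯ T_d^{n_dε_d}` associated with `n ∈ ℤ^d` and a vertex
`ε ∈ {0,1}^d` of the cube. -/
def cubeMap {X : Type*} [TopologicalSpace X] (T : Fin d → X ≃ₜ X)
    (n : Fin d → ℤ) (ε : Fin d → Bool) : X ≃ₜ X :=
  ((List.finRange d).map (fun i => T i ^ (if ε i then n i else 0))).prod

/-- The space of directional dynamical cubes `Q_{T₁,…,T_d}(X)`. -/
def cubes {X : Type*} [TopologicalSpace X] (T : Fin d → X ≃ₜ X) :
    Set ((Fin d → Bool) → X) :=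
  closure {y | ∃ (x : X) (n : Fin d → ℤ), ∀ ε, y ε = cubeMap T n ε x}

/-- The group of homeomorphisms generated by `T₁,…,T_d`. -/
def genGroup {X : Type*} [TopologicalSpace X] (T : Fin d → X ≃ₜ X) : Subgroup (X ≃ₜ X) :=
  Subgroup.closure (Set.range T)

/-- Minimality: every orbit is dense. -/
def IsMinimalSystem {X : Type*} [TopologicalSpace X] (T : Fin d → X ≃ₜ X) : Prop :=
  ∀ x : X, Dense {y : X | ∃ g ∈ genGroup T, g x = y}

/-- Distality: `inf_{g ∈ G} dist (g x) (g y) > 0` whenever `x ≠ y`. -/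
def IsDistalSystem {X : Type*} [MetricSpace X] (T : Fin d → X ≃ₜ X) : Prop :=
  ∀ x y : X, x ≠ y → ∃ δ > 0, ∀ g ∈ genGroup T, δ ≤ dist (g x) (g y)

/-- Unique closing parallelepiped property: two cubes agreeing in `2^d - 1` of their
coordinates are equal. -/
def HasUCP {X : Type*} [TopologicalSpace X] (T : Fin d → X ≃ₜ X) : Prop :=
  ∀ x ∈ cubes T, ∀ y ∈ cubes T,
    ∀ ε₀ : Fin d → Bool, (∀ ε, ε ≠ ε₀ → x ε = y ε) → x = y

/-- The relation `R_{T_j}(X)`: pairs `(x,y)` for which there is a cube `z` with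
`z_∅ = x`, `z_{{j}} = y` and `z_ε = z_{ε ∪ {j}}` for every nonempty `ε ⊆ [d] \ {j}`. -/
def relRT {X : Type*} [TopologicalSpace X] (T : Fin d → X ≃ₜ X) (j : Fin d) : Set (X × X) :=
  {p | ∃ z ∈ cubes T, z (fun _ => false) = p.1 ∧ z (fun i => decide (i = j)) = p.2 ∧
    ∀ ε : Fin d → Bool, ε j = false → ε ≠ (fun _ => false) →
      z ε = z (Function.update ε j true)}

/-- The `(T₁,…,T_d)`-regionally proximal relation. -/
def relRP {X : Type*} [TopologicalSpace X] (T : Fin d → X ≃ₜ X) : Set (X × X) :=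
  ⋂ j : Fin d, relRT T j

section AuxAlgebra

variable {X : Type*} [TopologicalSpace X]

lemma hmul_apply (f g : X ≃ₜ X) (x : X) : (f * g) x = f (g x) := rfl

lemma commute_of_pointwise {f g : X ≃ₜ X} (h : ∀ x, f (g x) = g (f x)) : Commute f g :=
  Homeomorph.ext fun x => h x

variable (T : Fin d → X ≃ₜ X)

/-- The product `∏ i, T i ^ e i`. -/
def prodPow (e : Fin d → ℤ) : X ≃ₜ X :=
  ((List.finRange d).map fun i => T i ^ e i).prod

lemma cubeMap_eq_prodPow (n : Fin d → ℤ) (ε : Fin d → Bool) :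
    cubeMap T n ε = prodPow T (fun i => if ε i then n i else 0) := rfl

variable {T}

lemma listProd_pow_mul (hT : ∀ i j, Commute (T i) (T j)) (l : List (Fin d)) (e f : Fin d → ℤ) :
    (l.map fun i => T i ^ e i).prod * (l.map fun i => T i ^ f i).prod
      = (l.map fun i => T i ^ (e i + f i)).prod := by
  induction l with
  | nil => simp
  | cons a t ih =>
    simp only [List.map_cons, List.prod_cons]
    have hc : Commute ((t.map fun i => T i ^ e i).prod) (T a ^ f a) :=
      Commute.list_prod_left _ _ (by
        intro x hx
        obtain ⟨i, _, rfl⟩ := List.mem_map.1 hx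
        exact (hT i a).zpow_zpow _ _)
    rw [hc.mul_mul_mul_comm, ih, ← zpow_add]

lemma prodPow_mul (hT : ∀ i j, Commute (T i) (T j)) (e f : Fin d → ℤ) :
    prodPow T e * prodPow T f = prodPow T (fun i => e i + f i) :=
  listProd_pow_mul hT _ e f

lemma prodPow_zero : prodPow T (fun _ => (0 : ℤ)) = 1 := by
  unfold prodPow
  apply List.prod_eq_one
  intro x hx
  obtain ⟨i, _, rfl⟩ := List.mem_map.1 hx
  exact zpow_zero _

lemma prodPow_mem (e : Fin d → ℤ) : prodPow T e ∈ genGroup T := by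
  apply list_prod_mem
  intro x hx
  obtain ⟨i, _, rfl⟩ := List.mem_map.1 hx
  exact zpow_mem (Subgroup.subset_closure (Set.mem_range_self i)) _

lemma commute_gen_T (hT : ∀ i j, Commute (T i) (T j)) {g : X ≃ₜ X} (hg : g ∈ genGroup T)
    (i : Fin d) : Commute (T i) g := by
  induction hg using Subgroup.closure_induction with
  | mem x hx => obtain ⟨j, rfl⟩ := hx; exact hT i j
  | one => exact Commute.one_right _
  | mul x y hx hy ihx ihy => exact ihx.mul_right ihy
  | inv x hx ih => exact ih.inv_right

lemma commute_gen_prodPow (hT : ∀ i j, Commute (T i) (T j)) {g : X ≃ₜ X}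
    (hg : g ∈ genGroup T) (e : Fin d → ℤ) : Commute g (prodPow T e) :=
  Commute.list_prod_right _ _ (by
    intro x hx
    obtain ⟨i, _, rfl⟩ := List.mem_map.1 hx
    exact ((commute_gen_T hT hg i).symm).zpow_right _)

lemma cubeMap_mul (hT : ∀ i j, Commute (T i) (T j)) (n m : Fin d → ℤ) (ε : Fin d → Bool) :
    cubeMap T n ε * cubeMap T m ε = cubeMap T (fun i => n i + m i) ε := by
  rw [cubeMap_eq_prodPow, cubeMap_eq_prodPow, cubeMap_eq_prodPow, prodPow_mul hT]
  congr 1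
  funext i
  by_cases h : ε i <;> simp [h]

lemma cubeMap_zero (ε : Fin d → Bool) : cubeMap T (fun _ => (0 : ℤ)) ε = 1 := by
  rw [cubeMap_eq_prodPow]
  have : (fun i => if ε i then (0 : ℤ) else 0) = fun _ => (0 : ℤ) := by
    funext i; by_cases h : ε i <;> simp [h]
  rw [this, prodPow_zero]

lemma cubeMap_mem (n : Fin d → ℤ) (ε : Fin d → Bool) : cubeMap T n ε ∈ genGroup T :=
  prodPow_mem _

lemma cubeMap_comm_apply (hT : ∀ i j, Commute (T i) (T j)) {g : X ≃ₜ X}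
    (hg : g ∈ genGroup T) (n : Fin d → ℤ) (ε : Fin d → Bool) (x : X) :
    cubeMap T n ε (g x) = g (cubeMap T n ε x) := by
  have h : g * cubeMap T n ε = cubeMap T n ε * g := by
    rw [cubeMap_eq_prodPow]; exact (commute_gen_prodPow hT hg _).eq
  exact (congrArg (fun (f : X ≃ₜ X) => f x) h).symm

end AuxAlgebra


section AuxTop

variable {X : Type*} [TopologicalSpace X]

/-- The pre-closure set of cube points. -/
def preCubes (T : Fin d → X ≃ₜ X) : Set ((Fin d → Bool) → X) :=
  {y | ∃ (x : X) (n : Fin d → ℤ), ∀ ε, y ε = cubeMap T n ε x}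

lemma cubes_eq_closure (T : Fin d → X ≃ₜ X) : cubes T = closure (preCubes T) := rfl

/-- The basic transformations `z ↦ (g ∘ T^{nε})(z ε)`. -/
def hmap (T : Fin d → X ≃ₜ X) (g : X ≃ₜ X) (n : Fin d → ℤ) :
    ((Fin d → Bool) → X) → ((Fin d → Bool) → X) :=
  fun z ε => g (cubeMap T n ε (z ε))

/-- The acting family on the cube space. -/
def HSet (T : Fin d → X ≃ₜ X) : Set (((Fin d → Bool) → X) → ((Fin d → Bool) → X)) :=
  {f | ∃ g ∈ genGroup T, ∃ n : Fin d → ℤ, f = hmap T g n}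

variable {T : Fin d → X ≃ₜ X}

lemma hmap_continuous (g : X ≃ₜ X) (n : Fin d → ℤ) : Continuous (hmap T g n) :=
  continuous_pi fun ε =>
    (g.continuous.comp (cubeMap T n ε).continuous).comp (continuous_apply ε)

lemma id_mem_HSet : id ∈ HSet T := by
  refine ⟨1, one_mem _, fun _ => 0, ?_⟩
  funext z ε
  show z ε = (1 : X ≃ₜ X) (cubeMap T (fun _ => 0) ε (z ε))
  rw [cubeMap_zero]
  rfl

lemma hmap_comp (hT : ∀ i j, Commute (T i) (T j)) {g g' : X ≃ₜ X} (hg' : g' ∈ genGroup T)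
    (n n' : Fin d → ℤ) :
    hmap T g n ∘ hmap T g' n' = hmap T (g * g') (fun i => n i + n' i) := by
  funext z ε
  show g (cubeMap T n ε (g' (cubeMap T n' ε (z ε))))
      = (g * g') (cubeMap T (fun i => n i + n' i) ε (z ε))
  rw [cubeMap_comm_apply hT hg', ← cubeMap_mul hT]
  rfl

lemma HSet_comp (hT : ∀ i j, Commute (T i) (T j)) {f1 f2 : ((Fin d → Bool) → X) → ((Fin d → Bool) → X)}
    (h1 : f1 ∈ HSet T) (h2 : f2 ∈ HSet T) : f1 ∘ f2 ∈ HSet T := by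
  obtain ⟨g, hg, n, rfl⟩ := h1
  obtain ⟨g', hg', n', rfl⟩ := h2
  exact ⟨g * g', mul_mem hg hg', fun i => n i + n' i, hmap_comp hT hg' n n'⟩

lemma hmap_mapsTo_pre (hT : ∀ i j, Commute (T i) (T j)) {g : X ≃ₜ X} (hg : g ∈ genGroup T)
    (n : Fin d → ℤ) : Set.MapsTo (hmap T g n) (preCubes T) (preCubes T) := by
  rintro z ⟨a, m, hz⟩
  refine ⟨g a, fun i => n i + m i, fun ε => ?_⟩
  show g (cubeMap T n ε (z ε)) = _
  rw [hz ε]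
  calc g (cubeMap T n ε (cubeMap T m ε a)) = g ((cubeMap T n ε * cubeMap T m ε) a) := rfl
    _ = g (cubeMap T (fun i => n i + m i) ε a) := by rw [cubeMap_mul hT]
    _ = cubeMap T (fun i => n i + m i) ε (g a) := (cubeMap_comm_apply hT hg _ _ _).symm

lemma HSet_mapsTo_cubes (hT : ∀ i j, Commute (T i) (T j))
    {f : ((Fin d → Bool) → X) → ((Fin d → Bool) → X)} (hf : f ∈ HSet T) :
    Set.MapsTo f (cubes T) (cubes T) := by
  obtain ⟨g, hg, n, rfl⟩ := hf
  have h1 : Set.MapsTo (hmap T g n) (preCubes T) (cubes T) :=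
    (hmap_mapsTo_pre hT hg n).mono_right subset_closure
  have h2 := h1.closure (hmap_continuous g n)
  rwa [cubes_eq_closure, IsClosed.closure_eq isClosed_closure] at h2

/-- The "flip" transformation associated with a pattern `p` (flips coordinates where `p` is
`false`). -/
lemma flip_mapsTo_cubes (hT : ∀ i j, Commute (T i) (T j)) (p : Fin d → Bool) :
    Set.MapsTo (fun (z : (Fin d → Bool) → X) (ε : Fin d → Bool) =>
      z (fun i => if p i then ε i else !ε i)) (cubes T) (cubes T) := by
  have contF : Continuous (fun (z : (Fin d → Bool) → X) (ε : Fin d → Bool) =>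
      z (fun i => if p i then ε i else !ε i)) :=
    continuous_pi fun ε => continuous_apply _
  have hpre : Set.MapsTo (fun (z : (Fin d → Bool) → X) (ε : Fin d → Bool) =>
      z (fun i => if p i then ε i else !ε i)) (preCubes T) (preCubes T) := by
    rintro z ⟨a, n, hz⟩
    refine ⟨prodPow T (fun i => if p i then 0 else n i) a,
      (fun i => if p i then n i else -n i), fun ε => ?_⟩
    show z (fun i => if p i then ε i else !ε i) = _
    rw [hz (fun i => if p i then ε i else !ε i), cubeMap_eq_prodPow, cubeMap_eq_prodPow]
    have hstep : prodPow T (fun i => if ε i then (if p i then n i else -n i) else 0)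
          (prodPow T (fun i => if p i then 0 else n i) a)
        = (prodPow T (fun i => if ε i then (if p i then n i else -n i) else 0)
            * prodPow T (fun i => if p i then 0 else n i)) a := rfl
    rw [hstep, prodPow_mul hT]
    have hexp : (fun i => (if ε i then (if p i then n i else -n i) else 0)
          + (if p i then 0 else n i))
        = (fun i => if (if p i then ε i else !ε i) then n i else 0) := by
      funext i
      by_cases hpi : p i <;> by_cases hεi : ε i <;> simp [hpi, hεi]
    rw [← hexp]
  intro z hz
  rw [cubes_eq_closure] at hz ⊢
  have := (hpre.closure contF) hz
  exact this

/-- The "collapse direction `j` to `false`" transformation. -/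
lemma collapse_mapsTo_cubes (hT : ∀ i j, Commute (T i) (T j)) (j : Fin d) :
    Set.MapsTo (fun (z : (Fin d → Bool) → X) (ε : Fin d → Bool) =>
      z (Function.update ε j false)) (cubes T) (cubes T) := by
  have contF : Continuous (fun (z : (Fin d → Bool) → X) (ε : Fin d → Bool) =>
      z (Function.update ε j false)) :=
    continuous_pi fun ε => continuous_apply _
  have hpre : Set.MapsTo (fun (z : (Fin d → Bool) → X) (ε : Fin d → Bool) =>
      z (Function.update ε j false)) (preCubes T) (preCubes T) := by
    rintro z ⟨a, n, hz⟩
    refine ⟨a, Function.update n j 0, fun ε => ?_⟩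
    show z (Function.update ε j false) = _
    rw [hz (Function.update ε j false), cubeMap_eq_prodPow, cubeMap_eq_prodPow]
    have hexp : (fun i => if Function.update ε j false i then n i else 0)
        = (fun i => if ε i then Function.update n j 0 i else 0) := by
      funext i
      by_cases hij : i = j
      · subst hij; simp
      · simp [Function.update_of_ne hij]
    rw [hexp]
  intro z hz
  rw [cubes_eq_closure] at hz ⊢
  exact (hpre.closure contF) hz

end AuxTop


section Ellis

/-- In a distal compact system, if `b` is in the orbit closure of `a` then `a` is in the orbit
closure of `b` (Ellis semigroup argument). -/
theorem distal_orbit_transfer {Y : Type*} [MetricSpace Y] [CompactSpace Y]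
    (H : Set (Y → Y)) (hcont : ∀ f ∈ H, Continuous f) (hid : id ∈ H)
    (hcomp : ∀ f ∈ H, ∀ g ∈ H, f ∘ g ∈ H)
    (hdistal : ∀ a b : Y, a ≠ b → ∃ δ > 0, ∀ f ∈ H, δ ≤ dist (f a) (f b))
    (a b : Y) (hb : b ∈ closure ((fun f => f a) '' H)) :
    a ∈ closure ((fun f => f b) '' H) := by
  have hEc : IsCompact (closure H) := isClosed_closure.isCompact
  have hcomp1 : ∀ f ∈ H, ∀ p ∈ closure H, f ∘ p ∈ closure H := by
    intro f hf p hp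
    have cont : Continuous fun q : Y → Y => f ∘ q :=
      continuous_pi fun x => (hcont f hf).comp (continuous_apply x)
    have hm : Set.MapsTo (fun q : Y → Y => f ∘ q) H (closure H) :=
      fun q hq => subset_closure (hcomp f hf q hq)
    have := hm.closure cont
    rw [closure_closure] at this
    exact this hp
  have hEcomp : ∀ p ∈ closure H, ∀ q ∈ closure H, p ∘ q ∈ closure H := by
    intro p hp q hq
    have cont : Continuous fun r : Y → Y => r ∘ q :=
      continuous_pi fun x => continuous_apply (q x)
    have hm : Set.MapsTo (fun r : Y → Y => r ∘ q) H (closure H) :=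
      fun f hf => hcomp1 f hf q hq
    have := hm.closure cont
    rw [closure_closure] at this
    exact this hp
  have hEinj : ∀ p ∈ closure H, Function.Injective p := by
    intro p hp u v huv
    by_contra hne
    obtain ⟨δ, hδ, hd⟩ := hdistal u v hne
    have hC : IsClosed {f : Y → Y | δ ≤ dist (f u) (f v)} :=
      isClosed_le continuous_const ((continuous_apply u).dist (continuous_apply v))
    have hle : δ ≤ dist (p u) (p v) := closure_minimal (fun f hf => hd f hf) hC hp
    rw [huv, dist_self] at hle
    linarith
  have hinv : ∀ p ∈ closure H, ∃ q ∈ closure H, q ∘ p = id := by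
    intro p hp
    letI : TopologicalSpace (Function.End Y) := inferInstanceAs (TopologicalSpace (Y → Y))
    letI : CompactSpace (Function.End Y) := inferInstanceAs (CompactSpace (Y → Y))
    letI : T2Space (Function.End Y) := inferInstanceAs (T2Space (Y → Y))
    have hsub : ((fun q : Y → Y => q ∘ p) '' closure H) ⊆ closure H := by
      rintro _ ⟨q, hq, rfl⟩; exact hEcomp q hq p hp
    have cml : ∀ r : Function.End Y, Continuous (· * r) := by
      intro r
      exact continuous_pi fun x => continuous_apply (r x)
    have contp : Continuous fun q : Y → Y => q ∘ p :=
      continuous_pi fun x => continuous_apply (p x)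
    obtain ⟨e, he, hee⟩ := exists_idempotent_in_compact_subsemigroup (M := Function.End Y) cml
      ((fun q : Y → Y => q ∘ p) '' closure H)
      ⟨id ∘ p, ⟨id, subset_closure hid, rfl⟩⟩
      (hEc.image contp)
      (by
        rintro _ ⟨q, hq, rfl⟩ _ ⟨q', hq', rfl⟩
        exact ⟨(q ∘ p) ∘ q', hEcomp _ (hEcomp q hq p hp) q' hq', rfl⟩)
    have heE : (e : Y → Y) ∈ closure H := hsub he
    have heid : (e : Y → Y) = id := by
      funext x
      exact hEinj e heE (show e (e x) = e x from congrFun hee x)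
    obtain ⟨q, hqE, hqe⟩ := he
    exact ⟨q, hqE, hqe.trans heid⟩
  have h1 : closure ((fun f => f a) '' H) ⊆ (fun f => f a) '' closure H :=
    closure_minimal (Set.image_mono subset_closure)
      (hEc.image (continuous_apply a)).isClosed
  obtain ⟨p, hp, hpa⟩ := h1 hb
  obtain ⟨q, hq, hqp⟩ := hinv p hp
  have haq : q b = a := by rw [← hpa]; exact congrFun hqp a
  have h2 : (fun f => f b) '' closure H ⊆ closure ((fun f => f b) '' H) :=
    image_closure_subset_closure_image (continuous_apply b)
  exact h2 ⟨q, hq, haq⟩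

end Ellis


section AuxMin

variable {X : Type*} [MetricSpace X] [CompactSpace X] {T : Fin d → X ≃ₜ X}

lemma HSet_distal (hdist : IsDistalSystem T) :
    ∀ z w : (Fin d → Bool) → X, z ≠ w →
      ∃ δ > 0, ∀ f ∈ HSet T, δ ≤ dist (f z) (f w) := by
  intro z w hzw
  obtain ⟨ε₀, hε⟩ : ∃ ε, z ε ≠ w ε := by
    by_contra h
    push_neg at h
    exact hzw (funext h)
  obtain ⟨δ, hδ, hd⟩ := hdist _ _ hε
  refine ⟨δ, hδ, ?_⟩
  rintro f ⟨g, hg, n, rfl⟩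
  have h1 : δ ≤ dist ((g * cubeMap T n ε₀) (z ε₀)) ((g * cubeMap T n ε₀) (w ε₀)) :=
    hd _ (mul_mem hg (cubeMap_mem n ε₀))
  calc δ ≤ dist (hmap T g n z ε₀) (hmap T g n w ε₀) := h1
    _ ≤ dist (hmap T g n z) (hmap T g n w) := dist_le_pi_dist _ _ ε₀

lemma cubes_subset_orbit_closure (hT : ∀ i j, Commute (T i) (T j))
    (hmin : IsMinimalSystem T) (hdist : IsDistalSystem T)
    {x : (Fin d → Bool) → X} (hx : x ∈ cubes T) :
    cubes T ⊆ closure ((fun f => f x) '' HSet T) := by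
  have hne : Nonempty X := by
    rcases isEmpty_or_nonempty X with h | h
    · exfalso
      rw [cubes_eq_closure] at hx
      have hpe : preCubes T = (∅ : Set _) := by
        ext y
        simp only [Set.mem_empty_iff_false, iff_false]
        rintro ⟨a, _, _⟩
        exact h.elim a
      rw [hpe, closure_empty] at hx
      exact hx
    · exact h
  obtain ⟨x₀⟩ := hne
  have step1 : cubes T ⊆ closure ((fun f => f (fun _ => x₀)) '' HSet T) := by
    rw [cubes_eq_closure]
    refine closure_minimal ?_ isClosed_closure
    rintro y ⟨a, n, hy⟩
    have hy' : y = fun ε => cubeMap T n ε a := funext hy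
    have haorb : a ∈ closure {y : X | ∃ g ∈ genGroup T, g x₀ = y} := hmin x₀ a
    have contc : Continuous fun b : X => (fun ε => cubeMap T n ε b : (Fin d → Bool) → X) :=
      continuous_pi fun ε => (cubeMap T n ε).continuous
    have himg : (fun b : X => (fun ε => cubeMap T n ε b : (Fin d → Bool) → X))
        '' {y : X | ∃ g ∈ genGroup T, g x₀ = y} ⊆ (fun f => f (fun _ => x₀)) '' HSet T := by
      rintro _ ⟨_, ⟨g, hg, rfl⟩, rfl⟩
      refine ⟨hmap T g n, ⟨g, hg, n, rfl⟩, ?_⟩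
      funext ε
      show g (cubeMap T n ε x₀) = cubeMap T n ε (g x₀)
      exact (cubeMap_comm_apply hT hg n ε x₀).symm
    rw [hy']
    exact (closure_mono himg) (image_closure_subset_closure_image contc ⟨a, haorb, rfl⟩)
  have hx' : x ∈ closure ((fun f => f (fun _ => x₀)) '' HSet T) := step1 hx
  have hz₀x : (fun _ => x₀ : (Fin d → Bool) → X) ∈ closure ((fun f => f x) '' HSet T) :=
    distal_orbit_transfer (HSet T) (by rintro f ⟨g, hg, n, rfl⟩; exact hmap_continuous g n)
      id_mem_HSet (fun f hf g hg => HSet_comp hT hf hg) (HSet_distal hdist) _ x hx'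
  refine step1.trans ?_
  refine closure_minimal ?_ isClosed_closure
  rintro _ ⟨f, hf, rfl⟩
  obtain ⟨g, hg, n, rfl⟩ := hf
  have h2 := image_closure_subset_closure_image (s := (fun f => f x) '' HSet T)
    (hmap_continuous (T := T) g n) ⟨(fun _ => x₀), hz₀x, rfl⟩
  refine closure_mono ?_ h2
  rintro _ ⟨_, ⟨f', hf', rfl⟩, rfl⟩
  exact ⟨hmap T g n ∘ f', HSet_comp hT ⟨g, hg, n, rfl⟩ hf', rfl⟩

end AuxMin


/-- **Theorem `StructThm`, (1) ⇔ (2).**  A minimal distal `ℤ^d`-system has the unique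
closing parallelepiped property iff `R_{T₁,…,T_d}(X) = Δ_X`. -/
theorem ucp_iff_relRP_trivial {X : Type*} [MetricSpace X] [CompactSpace X] {d : ℕ}
    (T : Fin d → X ≃ₜ X)
    (hcomm : ∀ i j : Fin d, ∀ x : X, T i (T j x) = T j (T i x))
    (hmin : IsMinimalSystem T) (hdist : IsDistalSystem T) :
    HasUCP T ↔ relRP T = Set.diagonal X := by
  have hT : ∀ i j, Commute (T i) (T j) := fun i j => Homeomorph.ext fun x => hcomm i j x
  constructor
  · -- UCP → R = Δ
    intro hucp
    apply Set.eq_of_subset_of_subset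
    · rintro ⟨a, b⟩ hab
      show a = b
      rcases Nat.eq_zero_or_pos d with hd | hd
      · -- degenerate case d = 0
        subst hd
        have hca : (fun _ : Fin 0 → Bool => a) ∈ cubes T :=
          subset_closure ⟨a, fun _ => 0, fun ε => by rw [cubeMap_zero]; rfl⟩
        have hcb : (fun _ : Fin 0 → Bool => b) ∈ cubes T :=
          subset_closure ⟨b, fun _ => 0, fun ε => by rw [cubeMap_zero]; rfl⟩
        have := hucp _ hca _ hcb (fun _ => true)
          (fun ε hε => absurd (funext fun i => i.elim0) hε)
        exact congrFun this (fun _ => true)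
      · set j : Fin d := ⟨0, hd⟩ with hj
        have hjmem := Set.mem_iInter.1 hab j
        obtain ⟨z, hz, hz0, hzj, hzd⟩ := hjmem
        have hw : (fun ε => z (Function.update ε j false)) ∈ cubes T :=
          collapse_mapsTo_cubes hT j hz
        have hagree : ∀ ε, ε ≠ (fun i => decide (i = j)) →
            z ε = z (Function.update ε j false) := by
          intro ε hε
          by_cases hεj : ε j = true
          · have hne : Function.update ε j false ≠ (fun _ => false) := by
              intro h
              apply hε
              funext i
              by_cases hij : i = j
              · subst hij; simp [hεj]
              · have h2 := congrFun h i
                rw [Function.update_of_ne hij] at h2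
                simp [hij, h2]
            have h1 := hzd (Function.update ε j false) (by simp) hne
            have h2 : Function.update (Function.update ε j false) j true = ε := by
              funext i
              by_cases hij : i = j
              · subst hij; simp [hεj]
              · simp [Function.update_of_ne hij]
            rw [h2] at h1
            exact h1.symm
          · have h2 : Function.update ε j false = ε := by
              funext i
              by_cases hij : i = j
              · subst hij; simp [Bool.not_eq_true] at hεj; simp [hεj]
              · simp [Function.update_of_ne hij]
            rw [h2]
        have heq := hucp z hz _ hw (fun i => decide (i = j)) hagree
        have h3 := congrFun heq (fun i => decide (i = j))
        have h4 : Function.update (fun i => decide (i = j)) j false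
            = (fun _ : Fin d => false) := by
          funext i
          by_cases hij : i = j
          · subst hij; simp
          · simp [Function.update_of_ne hij, hij]
        calc a = z (fun _ => false) := hz0.symm
          _ = z (Function.update (fun i => decide (i = j)) j false) := (congrArg z h4).symm
          _ = z (fun i => decide (i = j)) := h3.symm
          _ = b := hzj
    · rintro ⟨a, b⟩ hab
      have hab' : a = b := hab
      refine Set.mem_iInter.2 fun j => ?_
      exact ⟨fun _ => a,
        subset_closure ⟨a, fun _ => 0, fun ε => by rw [cubeMap_zero]; rfl⟩,
        rfl, hab', fun ε _ _ => rfl⟩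
  · -- R = Δ → UCP
    intro hR x hx y hy ε₀ hagree
    rcases isEmpty_or_nonempty X with hXe | hXne
    · funext ε; exact (hXe.elim (x ε))
    -- reflect so that the exceptional vertex becomes the top vertex
    have hμμ : ∀ ε : Fin d → Bool,
        (fun i => if ε₀ i then (fun i' => if ε₀ i' then ε i' else !ε i') i else
          !(fun i' => if ε₀ i' then ε i' else !ε i') i) = ε := by
      intro ε; funext i; by_cases h : ε₀ i <;> simp [h]
    have hFc : Set.MapsTo (fun (z : (Fin d → Bool) → X) (ε : Fin d → Bool) =>
        z (fun i => if ε₀ i then ε i else !ε i)) (cubes T) (cubes T) :=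
      flip_mapsTo_cubes hT ε₀
    set x' : (Fin d → Bool) → X := fun ε => x (fun i => if ε₀ i then ε i else !ε i) with hx'def
    set y' : (Fin d → Bool) → X := fun ε => y (fun i => if ε₀ i then ε i else !ε i) with hy'def
    have hx' : x' ∈ cubes T := hFc hx
    have hy' : y' ∈ cubes T := hFc hy
    have hμtopeq : (fun i => if ε₀ i then true else !true) = ε₀ := by
      funext i; by_cases h : ε₀ i <;> simp [h]
    have hμε₀ : (fun i => if ε₀ i then ε₀ i else !(ε₀ i)) = (fun _ : Fin d => true) := by
      funext i; by_cases h : ε₀ i <;> simp [h]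
    have hagree' : ∀ ε : Fin d → Bool, ε ≠ (fun _ => true) → x' ε = y' ε := by
      intro ε hε
      apply hagree
      intro h
      apply hε
      rw [← hμμ ε, h]
      exact hμε₀
    suffices hxy' : x' = y' by
      funext ε
      have h5 := congrFun hxy' (fun i => if ε₀ i then ε i else !ε i)
      rw [hx'def, hy'def] at h5
      simp only at h5
      rw [hμμ ε] at h5
      exact h5
    -- the main minimality/distality argument
    set W : (Fin d → Bool) → X := fun _ => x' (fun _ => true) with hWdef
    have hWQ : W ∈ cubes T :=
      subset_closure ⟨x' (fun _ => true), fun _ => 0, fun ε => by rw [cubeMap_zero]; rfl⟩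
    set H2 : Set (((Fin d → Bool) → X) × ((Fin d → Bool) → X) → ((Fin d → Bool) → X) × ((Fin d → Bool) → X)) := {F2 | ∃ f ∈ HSet T, F2 = Prod.map f f} with hH2def
    have hH2cont : ∀ F2 ∈ H2, Continuous F2 := by
      rintro _ ⟨f, ⟨g, hg, n, rfl⟩, rfl⟩
      exact (hmap_continuous g n).prodMap (hmap_continuous g n)
    have hH2id : id ∈ H2 := ⟨id, id_mem_HSet, (Prod.map_id).symm⟩
    have hH2comp : ∀ F2 ∈ H2, ∀ G2 ∈ H2, F2 ∘ G2 ∈ H2 := by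
      rintro _ ⟨f, hf, rfl⟩ _ ⟨g, hg, rfl⟩
      exact ⟨f ∘ g, HSet_comp hT hf hg, (Prod.map_comp_map _ _ _ _).symm⟩
    have hH2distal : ∀ P Q : ((Fin d → Bool) → X) × ((Fin d → Bool) → X), P ≠ Q → ∃ δ > 0, ∀ F2 ∈ H2, δ ≤ dist (F2 P) (F2 Q) := by
      intro P Q hPQ
      have : P.1 ≠ Q.1 ∨ P.2 ≠ Q.2 := by
        by_contra h
        push_neg at h
        exact hPQ (Prod.ext h.1 h.2)
      rcases this with h | h
      · obtain ⟨δ, hδ, hd⟩ := HSet_distal hdist _ _ h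
        refine ⟨δ, hδ, ?_⟩
        rintro _ ⟨f, hf, rfl⟩
        calc δ ≤ dist (f P.1) (f Q.1) := hd f hf
          _ ≤ dist (Prod.map f f P) (Prod.map f f Q) := by
            rw [Prod.dist_eq]; exact le_max_left _ _
      · obtain ⟨δ, hδ, hd⟩ := HSet_distal hdist _ _ h
        refine ⟨δ, hδ, ?_⟩
        rintro _ ⟨f, hf, rfl⟩
        calc δ ≤ dist (f P.2) (f Q.2) := hd f hf
          _ ≤ dist (Prod.map f f P) (Prod.map f f Q) := by
            rw [Prod.dist_eq]; exact le_max_right _ _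
    set N : Set (((Fin d → Bool) → X) × ((Fin d → Bool) → X)) := closure ((fun F2 => F2 (x', y')) '' H2) with hNdef
    -- the orbit closure N of (x',y') lies in the agreement set and in Q × Q
    have hN1 : N ⊆ {P : ((Fin d → Bool) → X) × ((Fin d → Bool) → X) | ∀ ε, ε ≠ (fun _ => true) → P.1 ε = P.2 ε} := by
      refine closure_minimal ?_ ?_
      · rintro _ ⟨_, ⟨f, hf, rfl⟩, rfl⟩
        intro ε hε
        obtain ⟨g, hg, n, rfl⟩ := hf
        show hmap T g n x' ε = hmap T g n y' ε
        unfold hmap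
        rw [hagree' ε hε]
      · have : {P : ((Fin d → Bool) → X) × ((Fin d → Bool) → X) | ∀ ε, ε ≠ (fun _ => true) → P.1 ε = P.2 ε}
            = ⋂ ε ∈ {ε : Fin d → Bool | ε ≠ (fun _ => true)},
              {P : ((Fin d → Bool) → X) × ((Fin d → Bool) → X) | P.1 ε = P.2 ε} := by
          ext P; simp
        rw [this]
        exact isClosed_biInter fun ε _ => isClosed_eq
          ((continuous_apply ε).comp continuous_fst)
          ((continuous_apply ε).comp continuous_snd)
    have hN2 : N ⊆ {P : ((Fin d → Bool) → X) × ((Fin d → Bool) → X) | P.2 ∈ cubes T} := by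
      refine closure_minimal ?_ (isClosed_closure.preimage continuous_snd)
      rintro _ ⟨_, ⟨f, hf, rfl⟩, rfl⟩
      exact HSet_mapsTo_cubes hT hf hy'
    -- by minimality, some element of N has first coordinate W
    have hWorb : W ∈ closure ((fun f => f x') '' HSet T) :=
      cubes_subset_orbit_closure hT hmin hdist hx' hWQ
    have hfstN : closure ((fun f => f x') '' HSet T) ⊆ Prod.fst '' N := by
      refine closure_minimal ?_ ((isClosed_closure.isCompact.image continuous_fst).isClosed)
      rintro _ ⟨f, hf, rfl⟩
      exact ⟨(f x', f y'), subset_closure ⟨Prod.map f f, ⟨f, hf, rfl⟩, rfl⟩, rfl⟩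
    obtain ⟨⟨W1, v⟩, hWvN, hW1⟩ := hfstN hWorb
    simp only at hW1
    subst hW1
    -- identify the second coordinate with W using R = Δ
    have h1 : ∀ ε, ε ≠ (fun _ : Fin d => true) → W ε = v ε := fun ε hε => hN1 hWvN ε hε
    have hvQ : v ∈ cubes T := hN2 hWvN
    have hrel : ∀ j : Fin d,
        (x' (fun _ => true), v (fun _ => true)) ∈ relRT T j := by
      intro j
      refine ⟨fun ε => v (fun i => if decide (i = j) then ε i else !ε i),
        flip_mapsTo_cubes hT (fun i => decide (i = j)) hvQ, ?_, ?_, ?_⟩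
      · have hνne : (fun i => if decide (i = j) then (fun _ : Fin d => false) i
            else !(fun _ : Fin d => false) i) ≠ (fun _ : Fin d => true) := by
          intro h
          have := congrFun h j
          simp at this
        exact (h1 _ hνne).symm
      · have hνj : (fun i => if decide (i = j) then (fun i' => decide (i' = j)) i
            else !(fun i' => decide (i' = j)) i) = (fun _ : Fin d => true) := by
          funext i
          by_cases h : i = j <;> simp [h]
        show v _ = v (fun _ => true)
        exact congrArg v hνj
      · intro ε hεj hεne
        have hA : (fun i => if decide (i = j) then ε i else !ε i) ≠ (fun _ : Fin d => true) := by
          intro h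
          have := congrFun h j
          simp [hεj] at this
        have hB : (fun i => if decide (i = j) then Function.update ε j true i
            else !Function.update ε j true i) ≠ (fun _ : Fin d => true) := by
          intro h
          apply hεne
          funext i
          by_cases hij : i = j
          · subst hij; exact hεj
          · have h2 := congrFun h i
            simp [hij, Function.update_of_ne hij] at h2
            simp [h2]
        show v _ = v _
        exact (h1 _ hA).symm.trans (h1 _ hB)
    have hmemRP : (x' (fun _ => true), v (fun _ => true)) ∈ relRP T :=
      Set.mem_iInter.2 hrel
    rw [hR] at hmemRP
    have hvtop : x' (fun _ => true) = v (fun _ => true) := hmemRP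
    have hvW : v = W := by
      funext ε
      by_cases hε : ε = (fun _ : Fin d => true)
      · rw [hε]; exact hvtop.symm
      · exact (h1 ε hε).symm
    -- now (W, W) ∈ N; transfer minimality back
    have hWWN : (W, W) ∈ N := hvW ▸ hWvN
    have htrans := distal_orbit_transfer H2 hH2cont hH2id hH2comp hH2distal
      (x', y') (W, W) hWWN
    have hdiag : closure ((fun F2 => F2 (W, W)) '' H2) ⊆ {P : ((Fin d → Bool) → X) × ((Fin d → Bool) → X) | P.1 = P.2} := by
      refine closure_minimal ?_ (isClosed_eq continuous_fst continuous_snd)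
      rintro _ ⟨_, ⟨f, hf, rfl⟩, rfl⟩
      rfl
    exact hdiag htrans
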